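/- For all U = (U_1,…,U_N) and V = (V_1,…,V_N) with U_i, V_i ∈ L²(ℝ^d, M_i), the reaction bilinear form satisfies the identity ⟨LU,V⟩ = −(1/2) Σ_{i,j=1}^N k_{ij} η_j ∫∫ [ U_i(v) V_i(v) + U_j(v') V_j(v') − 2 U_j(v') V_i(v) ] dM_j(v') dM_i(v). -/

import Mathlib

open Finset MeasureTheory

/-- The reaction bilinear form identity:
`⟨LU,V⟩ = −(1/2) Σ_{i,j} k_{ij} η_j ∫∫ [U_i(v)V_i(v) + U_j(v')V_j(v') − 2U_j(v')V_i(v)] dM_j(v') dM_i(v)`. -/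
theorem statement3
    (N d : ℕ) (hN : 2 ≤ N) (hd : 1 ≤ d)
    (k : Fin N → Fin N → ℝ) (hk : ∀ i j, 0 ≤ k i j)
    (η : Fin N → ℝ) (hηpos : ∀ i, 0 < η i) (hηsum : ∑ i, η i = 1)
    (hηbal : ∀ i, ∑ j, (k i j * η j - k j i * η i) = 0)
    (M : Fin N → Measure (Fin d → ℝ))
    (hM : ∀ i, IsProbabilityMeasure (M i))
    (U V : Fin N → (Fin d → ℝ) → ℝ)
    (hU : ∀ i, MemLp (U i) 2 (M i)) (hV : ∀ i, MemLp (V i) 2 (M i)) :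
    (∑ i, ∑ j, k i j * η j * ∫ v, ∫ w, U j w * V i v ∂(M j) ∂(M i))
      - ∑ i, ∑ j, k j i * η i * ∫ v, U i v * V i v ∂(M i)
    = -(1/2) * ∑ i, ∑ j, k i j * η j *
        ∫ v, ∫ w, (U i v * V i v + U j w * V j w - 2 * U j w * V i v) ∂(M j) ∂(M i) := by
  -- integrability facts
  have hUi : ∀ i, Integrable (U i) (M i) := fun i => (hU i).integrable one_le_two
  have hVi : ∀ i, Integrable (V i) (M i) := fun i => (hV i).integrable one_le_two
  have hUV : ∀ i, Integrable (fun x => U i x * V i x) (M i) := by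
    intro i
    have h12 : (1:ENNReal)/2 + 1/2 = 1 := by
      rw [ENNReal.div_add_div_same, one_add_one_eq_two,
        ENNReal.div_self two_ne_zero ENNReal.ofNat_ne_top]
    have : MemLp (U i • V i) 1 (M i) := by
      refine (hV i).smul (hU i)
    simpa [Pi.smul_apply, smul_eq_mul, Pi.mul_def] using this.integrable le_rfl
  -- notation
  set a : Fin N → ℝ := fun i => ∫ v, U i v * V i v ∂(M i) with ha
  set u : Fin N → ℝ := fun i => ∫ v, U i v ∂(M i) with hu
  set w : Fin N → ℝ := fun i => ∫ v, V i v ∂(M i) with hw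
  -- first double integral
  have key1 : ∀ i j, (∫ v, ∫ x, U j x * V i v ∂(M j) ∂(M i)) = u j * w i := by
    intro i j
    have h1 : ∀ v, (∫ x, U j x * V i v ∂(M j)) = u j * V i v := fun v =>
      integral_mul_const (V i v) (U j)
    simp_rw [h1]
    exact integral_const_mul (u j) (V i)
  -- second double integral
  have key2 : ∀ i j, (∫ v, ∫ x, (U i v * V i v + U j x * V j x - 2 * U j x * V i v)
      ∂(M j) ∂(M i)) = a i + a j - 2 * (u j * w i) := by
    intro i j
    have h1 : ∀ v, (∫ x, (U i v * V i v + U j x * V j x - 2 * U j x * V i v) ∂(M j))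
        = U i v * V i v + a j - 2 * (u j * V i v) := by
      intro v
      have hconst : Integrable (fun _ : (Fin d → ℝ) => U i v * V i v) (M j) :=
        integrable_const _
      have h2 : Integrable (fun x => 2 * U j x * V i v) (M j) := by
        have := ((hUi j).const_mul 2).mul_const (V i v)
        simpa [mul_assoc, mul_comm, mul_left_comm] using this
      have hadd : Integrable (fun x => U i v * V i v + U j x * V j x) (M j) :=
        hconst.add (hUV j)
      rw [integral_sub hadd h2, integral_add hconst (hUV j)]
      have hm : IsProbabilityMeasure (M j) := hM j
      simp only [integral_const, Measure.real, measure_univ, ENNReal.toReal_one, one_smul, smul_eq_mul]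
      have h3 : (∫ x, 2 * U j x * V i v ∂(M j)) = 2 * (u j * V i v) := by
        simp_rw [mul_assoc]
        rw [integral_const_mul 2 (fun x => U j x * V i v),
          integral_mul_const (V i v) (U j)]
      rw [h3, one_mul]
    simp_rw [h1]
    have h4 : Integrable (fun v => 2 * (u j * V i v)) (M i) :=
      ((hVi i).const_mul (u j)).const_mul 2
    have hadd : Integrable (fun v => U i v * V i v + a j) (M i) :=
      (hUV i).add (integrable_const (a j))
    rw [integral_sub hadd h4, integral_add (hUV i) (integrable_const (a j))]
    have hm : IsProbabilityMeasure (M i) := hM i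
    simp only [integral_const, Measure.real, measure_univ, ENNReal.toReal_one, one_smul, smul_eq_mul]
    rw [integral_const_mul 2 (fun v => u j * V i v), integral_const_mul (u j) (V i), one_mul]
  simp_rw [key1, key2]
  -- balance
  have hbal : ∀ i, (∑ j, k i j * η j) = ∑ j, k j i * η i := by
    intro i
    have h := hηbal i
    rw [Finset.sum_sub_distrib] at h
    linarith
  have h1 : ∑ i, ∑ j, k i j * η j * a i = ∑ i, ∑ j, k j i * η i * a i := by
    refine Finset.sum_congr rfl fun i _ => ?_
    rw [← Finset.sum_mul, ← Finset.sum_mul, hbal i]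
  have h2 : ∑ i, ∑ j, k i j * η j * a j = ∑ i, ∑ j, k j i * η i * a i := by
    rw [Finset.sum_comm]
  have h3 : ∑ i, ∑ j, k i j * η j * (a i + a j - 2 * (u j * w i))
      = (∑ i, ∑ j, k i j * η j * a i) + (∑ i, ∑ j, k i j * η j * a j)
        - 2 * ∑ i, ∑ j, k i j * η j * (u j * w i) := by
    rw [Finset.mul_sum]
    rw [← Finset.sum_add_distrib, ← Finset.sum_sub_distrib]
    refine Finset.sum_congr rfl fun i _ => ?_
    rw [Finset.mul_sum, ← Finset.sum_add_distrib, ← Finset.sum_sub_distrib]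
    exact Finset.sum_congr rfl fun j _ => by ring
  rw [h3, h1, h2]
  ring
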